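/- The first homology of a permutograph is generated by length 4 and length 6 cycles: for the permutograph G on words Fin N → Fin s, every element of ker ∂ that lies in the ℤ-span of the ordered pairs of adjacent vertices is a ℤ-linear combination of edge chains of closed walks in G of length 2 (back-and-forth paths), length 4 (squares), and length 6 (hexagons). -/

import Mathlib

/-- The permutograph on words `Fin N → Fin s`: two words are adjacent iff one is obtained
from the other by exchanging two distinct letters sitting in adjacent positions `i, i+1`. -/
def permutograph (N s : ℕ) : SimpleGraph (Fin N → Fin s) where
  Adj v w := ∃ (i : ℕ) (h : i + 1 < N),
      v ⟨i, Nat.lt_of_succ_lt h⟩ ≠ v ⟨i + 1, h⟩ ∧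
      w = v ∘ Equiv.swap ⟨i, Nat.lt_of_succ_lt h⟩ ⟨i + 1, h⟩
  symm := by
    constructor
    rintro v w ⟨i, h, hne, rfl⟩
    refine ⟨i, h, ?_, ?_⟩
    · simpa using hne.symm
    · funext k
      simp
  loopless := by
    constructor
    rintro v ⟨i, h, hne, hv⟩
    apply hne
    conv_lhs => rw [hv]
    simp

/-- The boundary map from the free `ℤ`-module on the ordered pairs of adjacent vertices
(darts) of a simple graph to the free `ℤ`-module on its vertices, `(v,w) ↦ w - v`. -/
noncomputable def graphBoundary {V : Type*} (G : SimpleGraph V) :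
    (G.Dart →₀ ℤ) →ₗ[ℤ] (V →₀ ℤ) :=
  Finsupp.lift (V →₀ ℤ) ℤ G.Dart fun d =>
    Finsupp.single d.toProd.2 1 - Finsupp.single d.toProd.1 1

/-- The edge chain of a walk: the formal sum of its consecutive directed edges. -/
noncomputable def edgeChain {V : Type*} {G : SimpleGraph V} {u v : V} (w : G.Walk u v) : G.Dart →₀ ℤ :=
  (w.darts.map fun d => Finsupp.single d (1 : ℤ)).sum

open SimpleGraph Finsupp

section PartA
variable {N s : ℕ}

/-- Number of inversions of a word. -/
def hgt (v : Fin N → Fin s) : ℕ :=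
  ((Finset.univ : Finset (Fin N × Fin N)).filter fun pq => pq.1 < pq.2 ∧ v pq.2 < v pq.1).card

lemma swap_lt_of_lt {p q : Fin N} (hq : (q : ℕ) = (p : ℕ) + 1) {x y : Fin N} (hxy : x < y)
    (hne : ¬(x = p ∧ y = q)) : Equiv.swap p q x < Equiv.swap p q y := by
  simp only [Equiv.swap_apply_def]
  split_ifs <;> simp only [Fin.lt_def, Fin.ext_iff, not_and] at * <;> omega

lemma hgt_swap_ascent' {v : Fin N → Fin s} {p q : Fin N} (hq : (q : ℕ) = (p : ℕ) + 1)
    (hlt : v p < v q) :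
    hgt (v ∘ Equiv.swap p q) = hgt v + 1 := by
  classical
  set σ := Equiv.swap p q with hσ
  have hpq : p < q := by simp [Fin.lt_def, hq]
  have hkey : ∀ x y : Fin N, x < y → ¬(x = p ∧ y = q) → σ x < σ y := fun x y h1 h2 =>
    swap_lt_of_lt hq h1 h2
  have hnotmem : (p, q) ∉ (Finset.univ : Finset (Fin N × Fin N)).filter
      fun pq => pq.1 < pq.2 ∧ v pq.2 < v pq.1 := by
    simp only [Finset.mem_filter, Finset.mem_univ, true_and, not_and]
    intro _
    exact not_lt.2 hlt.le
  have hswapne : ∀ e : Fin N × Fin N, e.1 < e.2 → (σ e.1, σ e.2) ≠ (p, q) := by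
    rintro e he hc
    rw [Prod.ext_iff] at hc
    have h1 : e.1 = q := by
      have := congrArg σ hc.1
      simpa [σ, Equiv.swap_apply_self, Equiv.swap_apply_left] using this
    have h2 : e.2 = p := by
      have := congrArg σ hc.2
      simpa [σ, Equiv.swap_apply_self, Equiv.swap_apply_right] using this
    rw [h1, h2] at he
    exact absurd he (not_lt.2 hpq.le)
  have hmemiff : ∀ e : Fin N × Fin N, e ≠ (p, q) → (e.1 < e.2 → (σ e.1 < σ e.2)) := by
    intro e hne h1
    exact hkey e.1 e.2 h1 (by rintro ⟨ha, hb⟩; exact hne (Prod.ext ha hb))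
  have hcard : ((Finset.univ : Finset (Fin N × Fin N)).filter
        fun pq => pq.1 < pq.2 ∧ (v ∘ σ) pq.2 < (v ∘ σ) pq.1).card
      = (insert (p, q) ((Finset.univ : Finset (Fin N × Fin N)).filter
        fun pq => pq.1 < pq.2 ∧ v pq.2 < v pq.1)).card := by
    refine Finset.card_bij' (fun e _ => if e = (p, q) then (p, q) else (σ e.1, σ e.2))
      (fun e _ => if e = (p, q) then (p, q) else (σ e.1, σ e.2)) ?_ ?_ ?_ ?_
    · intro e he
      simp only [Finset.mem_filter, Finset.mem_univ, true_and, Function.comp] at he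
      by_cases hpqe : e = (p, q)
      · simp [hpqe, Finset.mem_insert]
      · simp only [hpqe, if_false, Finset.mem_insert, Finset.mem_filter, Finset.mem_univ,
          true_and]
        right
        exact ⟨hmemiff e hpqe he.1, by simpa [Equiv.swap_apply_self, σ] using he.2⟩
    · intro e he
      rcases Finset.mem_insert.1 he with he1 | he2
      · subst he1
        simp only [if_pos rfl, Finset.mem_filter, Finset.mem_univ, true_and, Function.comp]
        exact ⟨hpq, by simpa [σ, Equiv.swap_apply_left, Equiv.swap_apply_right] using hlt⟩
      · have hne : e ≠ (p, q) := by rintro rfl; exact hnotmem he2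
        simp only [Finset.mem_filter, Finset.mem_univ, true_and] at he2
        simp only [hne, if_false, Finset.mem_filter, Finset.mem_univ, true_and, Function.comp]
        exact ⟨hmemiff e hne he2.1, by simpa [Equiv.swap_apply_self, σ] using he2.2⟩
    · intro e he
      simp only [Finset.mem_filter, Finset.mem_univ, true_and] at he
      by_cases hpqe : e = (p, q)
      · simp [hpqe]
      · simp only [hpqe, if_false, hswapne e he.1, Equiv.swap_apply_self, σ]
    · intro e he
      by_cases hpqe : e = (p, q)
      · simp [hpqe]
      · have he1 : e.1 < e.2 := by
          rcases Finset.mem_insert.1 he with h1 | h2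
          · exact absurd h1 hpqe
          · exact (Finset.mem_filter.1 h2).2.1
        simp only [hpqe, if_false, hswapne e he1, Equiv.swap_apply_self, σ]
  rw [hgt, hgt, hcard, Finset.card_insert_of_notMem hnotmem]

lemma hgt_swap_descent' {v : Fin N → Fin s} {p q : Fin N} (hq : (q : ℕ) = (p : ℕ) + 1)
    (hlt : v q < v p) :
    hgt v = hgt (v ∘ Equiv.swap p q) + 1 := by
  have h2 : (v ∘ Equiv.swap p q) p < (v ∘ Equiv.swap p q) q := by
    simpa [Equiv.swap_apply_left, Equiv.swap_apply_right] using hlt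
  have := hgt_swap_ascent' hq h2
  have heq : (v ∘ Equiv.swap p q) ∘ Equiv.swap p q = v := by
    funext x; simp [Equiv.swap_apply_self]
  rwa [heq] at this

end PartA
lemma swap_comm_fun {α : Type*} [DecidableEq α] {A B C D : α}
    (h1 : A ≠ C) (h2 : A ≠ D) (h3 : B ≠ C) (h4 : B ≠ D) (x : α) :
    Equiv.swap A B (Equiv.swap C D x) = Equiv.swap C D (Equiv.swap A B x) := by
  simp only [Equiv.swap_apply_def]
  split_ifs <;> simp_all

lemma braid_fun {α : Type*} [DecidableEq α] {A B C : α}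
    (hAB : A ≠ B) (hAC : A ≠ C) (hBC : B ≠ C) (x : α) :
    Equiv.swap A B (Equiv.swap B C x) =
      Equiv.swap B C (Equiv.swap A B (Equiv.swap B C (Equiv.swap A B x))) := by
  rcases eq_or_ne x A with rfl | hxA
  · simp [Equiv.swap_apply_left, Equiv.swap_apply_right,
      Equiv.swap_apply_of_ne_of_ne, hAB, hAC, hBC, hAB.symm, hAC.symm, hBC.symm]
  rcases eq_or_ne x B with rfl | hxB
  · simp [Equiv.swap_apply_left, Equiv.swap_apply_right,
      Equiv.swap_apply_of_ne_of_ne, hAB, hAC, hBC, hAB.symm, hAC.symm, hBC.symm]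
  rcases eq_or_ne x C with rfl | hxC
  · simp [Equiv.swap_apply_left, Equiv.swap_apply_right,
      Equiv.swap_apply_of_ne_of_ne, hAB, hAC, hBC, hAB.symm, hAC.symm, hBC.symm]
  · simp [Equiv.swap_apply_of_ne_of_ne, hxA, hxB, hxC]

lemma braid_fun' {α : Type*} [DecidableEq α] {A B C : α}
    (hAB : A ≠ B) (hAC : A ≠ C) (hBC : B ≠ C) (x : α) :
    Equiv.swap B C (Equiv.swap A B x) =
      Equiv.swap A B (Equiv.swap B C (Equiv.swap A B (Equiv.swap B C x))) := by
  rcases eq_or_ne x A with rfl | hxA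
  · simp [Equiv.swap_apply_left, Equiv.swap_apply_right,
      Equiv.swap_apply_of_ne_of_ne, hAB, hAC, hBC, hAB.symm, hAC.symm, hBC.symm]
  rcases eq_or_ne x B with rfl | hxB
  · simp [Equiv.swap_apply_left, Equiv.swap_apply_right,
      Equiv.swap_apply_of_ne_of_ne, hAB, hAC, hBC, hAB.symm, hAC.symm, hBC.symm]
  rcases eq_or_ne x C with rfl | hxC
  · simp [Equiv.swap_apply_left, Equiv.swap_apply_right,
      Equiv.swap_apply_of_ne_of_ne, hAB, hAC, hBC, hAB.symm, hAC.symm, hBC.symm]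
  · simp [Equiv.swap_apply_of_ne_of_ne, hxA, hxB, hxC]
section generic
variable {V : Type*} {G : SimpleGraph V}

@[simp] lemma edgeChain_nil {u : V} : edgeChain (Walk.nil : G.Walk u u) = 0 := rfl

@[simp] lemma edgeChain_cons {u v w : V} (h : G.Adj u v) (p : G.Walk v w) :
    edgeChain (Walk.cons h p) = Finsupp.single ⟨(u, v), h⟩ 1 + edgeChain p := by
  simp [edgeChain, Walk.darts_cons]

@[simp] lemma edgeChain_append {u v w : V} (p : G.Walk u v) (q : G.Walk v w) :
    edgeChain (p.append q) = edgeChain p + edgeChain q := by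
  simp [edgeChain, Walk.darts_append]

@[simp] lemma edgeChain_copy {u v u' v' : V} (p : G.Walk u v) (hu : u = u') (hv : v = v') :
    edgeChain (p.copy hu hv) = edgeChain p := by
  simp [edgeChain, Walk.darts_copy]

/-- The span of edge chains of closed walks of length 2, 4, 6. -/
noncomputable def cycSpan (G : SimpleGraph V) : Submodule ℤ (G.Dart →₀ ℤ) :=
  Submodule.span ℤ
    {x : G.Dart →₀ ℤ | ∃ (u : V) (w : G.Walk u u),
      (w.length = 2 ∨ w.length = 4 ∨ w.length = 6) ∧ x = edgeChain w}

lemma closedWalk_mem_cycSpan {u : V} (w : G.Walk u u)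
    (hl : w.length = 2 ∨ w.length = 4 ∨ w.length = 6) : edgeChain w ∈ cycSpan G :=
  Submodule.subset_span ⟨u, w, hl, rfl⟩

lemma dart_eta (d : G.Dart) : (⟨(d.toProd.1, d.toProd.2), d.adj⟩ : G.Dart) = d := by
  apply Dart.ext; simp

lemma mem2 (d : G.Dart) :
    Finsupp.single d 1 + Finsupp.single d.symm 1 ∈ cycSpan G := by
  have hadj : G.Adj d.toProd.1 d.toProd.2 := d.adj
  have w : G.Walk d.toProd.1 d.toProd.1 := Walk.cons hadj (Walk.cons hadj.symm Walk.nil)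
  have : edgeChain (Walk.cons hadj (Walk.cons hadj.symm Walk.nil)) =
      Finsupp.single d 1 + Finsupp.single d.symm 1 := by
    have e1 : (⟨(d.toProd.1, d.toProd.2), hadj⟩ : G.Dart) = d := dart_eta d
    have e2 : (⟨(d.toProd.2, d.toProd.1), hadj.symm⟩ : G.Dart) = d.symm := by
      apply Dart.ext; rfl
    rw [edgeChain_cons, edgeChain_cons, edgeChain_nil, add_zero, e1, e2]
  rw [← this]
  exact closedWalk_mem_cycSpan _ (by simp)

lemma edgeChain_reverse_add_mem {u v : V} (p : G.Walk u v) :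
    edgeChain p.reverse + edgeChain p ∈ cycSpan G := by
  induction p with
  | nil => simp only [Walk.reverse_nil, edgeChain_nil, add_zero]; exact Submodule.zero_mem _
  | cons h q ih =>
    rw [Walk.reverse_cons, edgeChain_append, edgeChain_cons, edgeChain_cons, edgeChain_nil]
    have : edgeChain q.reverse + Finsupp.single ⟨(_, _), h.symm⟩ 1 +
        (Finsupp.single ⟨(_, _), h⟩ 1 + edgeChain q)
        = (edgeChain q.reverse + edgeChain q) +
          (Finsupp.single (⟨(_, _), h⟩ : G.Dart) 1 +
           Finsupp.single (Dart.symm ⟨(_, _), h⟩) 1) := by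
      rw [show Dart.symm (⟨(_, _), h⟩ : G.Dart) = ⟨(_, _), h.symm⟩ from rfl]
      abel
    rw [add_zero, this]
    exact Submodule.add_mem _ ih (mem2 _)

end generic
/-- Interior strict local maximum in a list of naturals. -/
def listILM : List ℕ → Prop
  | x :: y :: z :: t => (x < y ∧ z < y) ∨ listILM (y :: z :: t)
  | _ => False

@[simp] lemma listILM_nil : listILM [] = False := rfl
@[simp] lemma listILM_single (x : ℕ) : listILM [x] = False := rfl
@[simp] lemma listILM_pair (x y : ℕ) : listILM [x, y] = False := rfl
lemma listILM_cons3 (x y z : ℕ) (t : List ℕ) :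
    listILM (x :: y :: z :: t) = ((x < y ∧ z < y) ∨ listILM (y :: z :: t)) := rfl

/-- steps of ±1 -/
def stepR (x y : ℕ) : Prop := x = y + 1 ∨ y = x + 1

lemma listG : ∀ (t : List ℕ) (a m : ℕ), ¬ listILM (a :: m :: t) →
    List.Chain' stepR (a :: m :: t) → a < m →
    ∀ x ∈ a :: m :: t, x ≤ (a :: m :: t).getLast (by simp) := by
  intro t
  induction t with
  | nil =>
    intro a m _ _ ham x hx
    rcases List.mem_cons.1 hx with rfl | hx
    · simpa using ham.le
    · simp at hx
      simp [hx]
  | cons z t' ih =>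
    intro a m hilm hch ham x hx
    rw [listILM_cons3, not_or, not_and] at hilm
    have hmz : stepR m z := by
      have := hch.tail
      exact List.isChain_cons_cons.1 this |>.1
    have hmltz : m < z := by
      have := hilm.1 ham
      rcases hmz with h | h <;> omega
    have hlast : (a :: m :: z :: t').getLast (by simp) = (m :: z :: t').getLast (by simp) := by
      rw [List.getLast_cons (by simp)]
    rw [hlast]
    rcases List.mem_cons.1 hx with rfl | hx
    · exact le_trans ham.le (ih m z hilm.2 hch.tail hmltz m (by simp))
    · exact ih m z hilm.2 hch.tail hmltz x hx

lemma listF : ∀ (t : List ℕ) (a : ℕ), ¬ listILM (a :: t) →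
    List.Chain' stepR (a :: t) →
    ∀ x ∈ a :: t, x ≤ max a ((a :: t).getLast (by simp)) := by
  intro t
  induction t with
  | nil => intro a _ _ x hx; simp at hx; simp [hx]
  | cons m t' ih =>
    intro a hilm hch x hx
    have ham : stepR a m := (List.isChain_cons_cons.1 hch).1
    by_cases hlt : a < m
    · have := listG t' a m hilm hch hlt x hx
      exact le_trans this (le_max_right _ _)
    · have hmlt : m < a := by rcases ham with h | h <;> omega
      have hlast : (a :: m :: t').getLast (by simp) = (m :: t').getLast (by simp) := by
        rw [List.getLast_cons (by simp)]
      have hilm' : ¬ listILM (m :: t') := by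
        cases t' with
        | nil => simp
        | cons z t'' =>
          intro hc
          exact hilm (Or.inr hc)
      rcases List.mem_cons.1 hx with rfl | hx
      · exact le_max_left _ _
      · have := ih m hilm' hch.tail x hx
        rw [hlast]
        rcases le_max_iff.1 this with h | h
        · exact le_trans h (le_trans hmlt.le (le_max_left _ _))
        · exact le_trans h (le_max_right _ _)

section Surgery
variable {N s : ℕ}

lemma adj_dirs {a : Fin N → Fin s} {i : ℕ} (hiN : i + 1 < N)
    (hne : a ⟨i, Nat.lt_of_succ_lt hiN⟩ ≠ a ⟨i+1, hiN⟩) :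
    (a ⟨i, Nat.lt_of_succ_lt hiN⟩ < a ⟨i+1, hiN⟩ ∧
      hgt (a ∘ Equiv.swap ⟨i, Nat.lt_of_succ_lt hiN⟩ ⟨i+1, hiN⟩) = hgt a + 1) ∨
    (a ⟨i+1, hiN⟩ < a ⟨i, Nat.lt_of_succ_lt hiN⟩ ∧
      hgt a = hgt (a ∘ Equiv.swap ⟨i, Nat.lt_of_succ_lt hiN⟩ ⟨i+1, hiN⟩) + 1) := by
  rcases lt_or_gt_of_ne hne with hlt | hlt
  · exact Or.inl ⟨hlt, hgt_swap_ascent' rfl hlt⟩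
  · exact Or.inr ⟨hlt, hgt_swap_descent' rfl hlt⟩

set_option maxHeartbeats 1000000 in
lemma lemD {a b : Fin N → Fin s} (p : (permutograph N s).Walk a b) :
    listILM (p.support.map hgt) →
    ∃ p' : (permutograph N s).Walk a b,
      (p'.support.map fun x => 3 ^ hgt x).sum < (p.support.map fun x => 3 ^ hgt x).sum ∧
      edgeChain p - edgeChain p' ∈ cycSpan (permutograph N s) := by
  induction p with
  | nil => intro h; simp [SimpleGraph.Walk.support_nil] at h
  | @cons a' m b' h1 p₁ ih =>
    cases p₁ with
    | nil => intro h; simp [SimpleGraph.Walk.support_cons, SimpleGraph.Walk.support_nil] at h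
    | @cons _ n _ h2 q =>
      intro hilm
      rw [Walk.support_cons, Walk.support_cons, Walk.support_eq_cons q, List.map_cons,
        List.map_cons, List.map_cons, listILM_cons3] at hilm
      rcases hilm with hilm' | hrec
      case inr =>
        obtain ⟨p₁', hμ, hS⟩ := ih (by
          rw [Walk.support_cons, Walk.support_eq_cons q, List.map_cons, List.map_cons]
          exact hrec)
        refine ⟨Walk.cons h1 p₁', ?_, ?_⟩
        · simp only [Walk.support_cons, List.map_cons, List.sum_cons] at hμ ⊢
          omega
        · have hd : edgeChain (Walk.cons h1 (Walk.cons h2 q)) - edgeChain (Walk.cons h1 p₁') =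
              edgeChain (Walk.cons h2 q) - edgeChain p₁' := by
            simp only [edgeChain_cons]; abel
          rw [hd]; exact hS
      case inl =>
        obtain ⟨hup, hdn⟩ := hilm'
        obtain ⟨i, hiN, hnei, hm⟩ := id h1
        obtain ⟨j, hjN, hnej, hn⟩ := id h2
        have hdir_i := adj_dirs hiN hnei
        rw [← hm] at hdir_i
        have hdir_j := adj_dirs hjN hnej
        rw [← hn] at hdir_j
        have hdi : a' ⟨i, Nat.lt_of_succ_lt hiN⟩ < a' ⟨i+1, hiN⟩ ∧ hgt m = hgt a' + 1 := by
          rcases hdir_i with h | h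
          · exact h
          · exact absurd hup (by omega)
        obtain ⟨hlt_a, hMa⟩ := hdi
        have hdj : m ⟨j+1, hjN⟩ < m ⟨j, Nat.lt_of_succ_lt hjN⟩ ∧ hgt m = hgt n + 1 := by
          rcases hdir_j with h | h
          · exact absurd hdn (by omega)
          · exact ⟨h.1, h.2⟩
        obtain ⟨hlt_m, hMn⟩ := hdj
        have hcases : i = j ∨ (i ≠ j ∧ i + 1 ≠ j ∧ j + 1 ≠ i) ∨ j = i + 1 ∨ i = j + 1 := by
          omega
        rcases hcases with rfl | hfar | rfl | rfl
        · -- backtrack: i = j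
          have hna : n = a' := by
            rw [hn, hm]
            funext x
            simp [Function.comp, Equiv.swap_apply_self]
          refine ⟨q.copy hna rfl, ?_, ?_⟩
          · simp only [Walk.support_copy, Walk.support_cons, List.map_cons, List.sum_cons]
            have h3a : 0 < 3 ^ hgt a' := pow_pos (by norm_num) _
            have h3m : 0 < 3 ^ hgt m := pow_pos (by norm_num) _
            omega
          · have hd2 : (⟨(m, n), h2⟩ : (permutograph N s).Dart) =
                (⟨(a', m), h1⟩ : (permutograph N s).Dart).symm := by
              apply SimpleGraph.Dart.ext
              simp [SimpleGraph.Dart.symm, hna]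
            have hdiff : edgeChain (Walk.cons h1 (Walk.cons h2 q)) - edgeChain (q.copy hna rfl)
                = Finsupp.single (⟨(a', m), h1⟩ : (permutograph N s).Dart) 1 +
                  Finsupp.single (⟨(m, n), h2⟩ : (permutograph N s).Dart) 1 := by
              rw [edgeChain_cons, edgeChain_cons, edgeChain_copy]; abel
            rw [hdiff, hd2]
            exact mem2 _
        · -- square: disjoint swaps
          set Pi : Fin N := ⟨i, Nat.lt_of_succ_lt hiN⟩ with hPidef
          set Pi1 : Fin N := ⟨i+1, hiN⟩ with hPi1def
          set Pj : Fin N := ⟨j, Nat.lt_of_succ_lt hjN⟩ with hPjdef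
          set Pj1 : Fin N := ⟨j+1, hjN⟩ with hPj1def
          have hPiPj : Pi ≠ Pj := Fin.ne_of_val_ne hfar.1
          have hPiPj1 : Pi ≠ Pj1 := Fin.ne_of_val_ne (by simp [hPidef, hPj1def]; omega)
          have hPi1Pj : Pi1 ≠ Pj := Fin.ne_of_val_ne (by simp [hPi1def, hPjdef]; omega)
          have hPi1Pj1 : Pi1 ≠ Pj1 := Fin.ne_of_val_ne (by simp [hPi1def, hPj1def]; omega)
          have hmj : m Pj = a' Pj := by
            rw [hm]
            simp only [Function.comp_apply]
            rw [Equiv.swap_apply_of_ne_of_ne hPiPj.symm hPi1Pj.symm]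
          have hmj1 : m Pj1 = a' Pj1 := by
            rw [hm]
            simp only [Function.comp_apply]
            rw [Equiv.swap_apply_of_ne_of_ne hPiPj1.symm hPi1Pj1.symm]
          have hnej' : a' Pj ≠ a' Pj1 := by rw [← hmj, ← hmj1]; exact hnej
          have hlt' : a' Pj1 < a' Pj := by rw [← hmj, ← hmj1]; exact hlt_m
          set m' : Fin N → Fin s := a' ∘ ⇑(Equiv.swap Pj Pj1) with hm'
          have h1' : (permutograph N s).Adj a' m' := ⟨j, hjN, hnej', hm'⟩
          have h2' : (permutograph N s).Adj m' n := by
            refine ⟨i, hiN, ?_, ?_⟩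
            · rw [hm']
              simp only [Function.comp_apply]
              rw [Equiv.swap_apply_of_ne_of_ne hPiPj hPiPj1,
                Equiv.swap_apply_of_ne_of_ne hPi1Pj hPi1Pj1]
              exact hnei
            · rw [hn, hm, hm']
              funext x
              simp only [Function.comp_apply]
              exact congrArg a' (swap_comm_fun hPiPj hPiPj1 hPi1Pj hPi1Pj1 x)
          have hMm' : hgt a' = hgt m' + 1 := by
            rw [hm']; exact hgt_swap_descent' rfl hlt'
          have hpow : (3:ℕ) ^ (hgt m') < 3 ^ (hgt m) :=
            Nat.pow_lt_pow_right (by norm_num) (by omega)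
          refine ⟨Walk.cons h1' (Walk.cons h2' q), ?_, ?_⟩
          · simp only [Walk.support_cons, List.map_cons, List.sum_cons]
            omega
          · have W4 : (permutograph N s).Walk a' a' :=
              Walk.cons h1 (Walk.cons h2 (Walk.cons h2'.symm (Walk.cons h1'.symm Walk.nil)))
            have hW4 : edgeChain (Walk.cons h1 (Walk.cons h2 (Walk.cons h2'.symm
                (Walk.cons h1'.symm Walk.nil)))) ∈ cycSpan (permutograph N s) :=
              closedWalk_mem_cycSpan _ (Or.inr (Or.inl (by
                simp [SimpleGraph.Walk.length_cons])))
            have e2 : (⟨(m', n), h2'⟩ : (permutograph N s).Dart).symm = ⟨(n, m'), h2'.symm⟩ :=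
              rfl
            have e1 : (⟨(a', m'), h1'⟩ : (permutograph N s).Dart).symm =
                ⟨(m', a'), h1'.symm⟩ := rfl
            have hdiff : edgeChain (Walk.cons h1 (Walk.cons h2 q)) -
                edgeChain (Walk.cons h1' (Walk.cons h2' q)) =
                edgeChain (Walk.cons h1 (Walk.cons h2 (Walk.cons h2'.symm
                  (Walk.cons h1'.symm Walk.nil)))) -
                (Finsupp.single (⟨(m', n), h2'⟩ : (permutograph N s).Dart) 1 +
                  Finsupp.single (⟨(m', n), h2'⟩ : (permutograph N s).Dart).symm 1) -
                (Finsupp.single (⟨(a', m'), h1'⟩ : (permutograph N s).Dart) 1 +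
                  Finsupp.single (⟨(a', m'), h1'⟩ : (permutograph N s).Dart).symm 1) := by
              rw [e1, e2]
              simp only [edgeChain_cons, edgeChain_nil]
              abel
            rw [hdiff]
            exact sub_mem (sub_mem hW4 (mem2 _)) (mem2 _)
        · -- hexagon: j = i + 1
          set A : Fin N := ⟨i, Nat.lt_of_succ_lt hiN⟩ with hAdef
          set B : Fin N := ⟨i+1, hiN⟩ with hBdef
          set C : Fin N := ⟨i+1+1, hjN⟩ with hCdef
          have hAB : A ≠ B := Fin.ne_of_val_ne (by simp [hAdef, hBdef])
          have hAC : A ≠ C := Fin.ne_of_val_ne (by simp [hAdef, hCdef]; omega)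
          have hBC : B ≠ C := Fin.ne_of_val_ne (by simp [hBdef, hCdef])
          have hn2 : n = m ∘ ⇑(Equiv.swap B C) := hn
          have hlt_m2 : m C < m B := hlt_m
          have ha_mB : m B = a' A := by
            rw [hm]; simp only [Function.comp_apply, Equiv.swap_apply_right]
          have ha_mC : m C = a' C := by
            rw [hm]; simp only [Function.comp_apply]
            rw [Equiv.swap_apply_of_ne_of_ne hAC.symm hBC.symm]
          have hzy : a' C < a' A := by rw [← ha_mB, ← ha_mC]; exact hlt_m2
          have hyx : a' A < a' B := hlt_a
          have hzx : a' C < a' B := lt_trans hzy hyx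
          set w1 : Fin N → Fin s := a' ∘ ⇑(Equiv.swap B C) with hw1
          set w2 : Fin N → Fin s := w1 ∘ ⇑(Equiv.swap A B) with hw2
          set w3 : Fin N → Fin s := w2 ∘ ⇑(Equiv.swap B C) with hw3
          have hv_w1A : w1 A = a' A := by
            rw [hw1]; simp only [Function.comp_apply]
            rw [Equiv.swap_apply_of_ne_of_ne hAB hAC]
          have hv_w1B : w1 B = a' C := by
            rw [hw1]; simp only [Function.comp_apply, Equiv.swap_apply_left]
          have hv_w1C : w1 C = a' B := by
            rw [hw1]; simp only [Function.comp_apply, Equiv.swap_apply_right]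
          have hv_w2A : w2 A = w1 B := by
            rw [hw2]; simp only [Function.comp_apply, Equiv.swap_apply_left]
          have hv_w2B : w2 B = w1 A := by
            rw [hw2]; simp only [Function.comp_apply, Equiv.swap_apply_right]
          have hv_w2C : w2 C = w1 C := by
            rw [hw2]; simp only [Function.comp_apply]
            rw [Equiv.swap_apply_of_ne_of_ne hAC.symm hBC.symm]
          have hv_w3A : w3 A = w2 A := by
            rw [hw3]; simp only [Function.comp_apply]
            rw [Equiv.swap_apply_of_ne_of_ne hAB hAC]
          have hv_w3B : w3 B = w2 C := by
            rw [hw3]; simp only [Function.comp_apply, Equiv.swap_apply_left]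
          have e1 : (permutograph N s).Adj a' w1 := by
            refine ⟨i+1, hjN, ?_, ?_⟩
            · exact ne_of_gt hzx
            · exact hw1
          have e2 : (permutograph N s).Adj w1 w2 := by
            refine ⟨i, hiN, ?_, hw2⟩
            rw [hv_w1A, hv_w1B]
            exact ne_of_gt hzy
          have e3 : (permutograph N s).Adj w2 w3 := by
            refine ⟨i+1, hjN, ?_, ?_⟩
            · show w2 B ≠ w2 C
              rw [hv_w2B, hv_w1A, hv_w2C, hv_w1C]
              exact ne_of_lt hyx
            · exact hw3
          have e4 : (permutograph N s).Adj w3 n := by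
            refine ⟨i, hiN, ?_, ?_⟩
            · rw [hv_w3A, hv_w2A, hv_w1B, hv_w3B, hv_w2C, hv_w1C]
              exact ne_of_lt hzx
            · rw [hn2, hm, hw3, hw2, hw1]
              funext x0
              simp only [Function.comp_apply]
              exact congrArg a' (braid_fun hAB hAC hBC x0)
          have hH1 : hgt a' = hgt w1 + 1 := by
            rw [hw1]; exact hgt_swap_descent' rfl hzx
          have hH2 : hgt w1 = hgt w2 + 1 := by
            rw [hw2]
            refine hgt_swap_descent' rfl ?_
            rw [hv_w1A, hv_w1B]
            exact hzy
          have hH3 : hgt w3 = hgt w2 + 1 := by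
            rw [hw3]
            refine hgt_swap_ascent' rfl ?_
            rw [hv_w2B, hv_w1A, hv_w2C, hv_w1C]
            exact hyx
          have hone : 1 ≤ 3 ^ (hgt w2) := Nat.one_le_pow _ _ (by norm_num)
          have hp1 : (3:ℕ) ^ (hgt w1) = 3 * 3 ^ (hgt w2) := by
            rw [hH2, pow_succ]; ring
          have hp3 : (3:ℕ) ^ (hgt w3) = 3 * 3 ^ (hgt w2) := by
            rw [hH3, pow_succ]; ring
          have hpm : (3:ℕ) ^ (hgt m) = 27 * 3 ^ (hgt w2) := by
            have : hgt m = hgt w2 + 3 := by omega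
            rw [this, pow_add]; ring
          refine ⟨Walk.cons e1 (Walk.cons e2 (Walk.cons e3 (Walk.cons e4 q))), ?_, ?_⟩
          · simp only [Walk.support_cons, List.map_cons, List.sum_cons]
            omega
          · have hhex : edgeChain (Walk.cons h1 (Walk.cons h2 (Walk.cons e4.symm
                (Walk.cons e3.symm (Walk.cons e2.symm (Walk.cons e1.symm Walk.nil))))))
                ∈ cycSpan (permutograph N s) :=
              closedWalk_mem_cycSpan _ (Or.inr (Or.inr (by
                simp [SimpleGraph.Walk.length_cons])))
            have s1 : (⟨(a', w1), e1⟩ : (permutograph N s).Dart).symm =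
                ⟨(w1, a'), e1.symm⟩ := rfl
            have s2 : (⟨(w1, w2), e2⟩ : (permutograph N s).Dart).symm =
                ⟨(w2, w1), e2.symm⟩ := rfl
            have s3 : (⟨(w2, w3), e3⟩ : (permutograph N s).Dart).symm =
                ⟨(w3, w2), e3.symm⟩ := rfl
            have s4 : (⟨(w3, n), e4⟩ : (permutograph N s).Dart).symm =
                ⟨(n, w3), e4.symm⟩ := rfl
            have hdiff : edgeChain (Walk.cons h1 (Walk.cons h2 q)) -
                edgeChain (Walk.cons e1 (Walk.cons e2 (Walk.cons e3 (Walk.cons e4 q)))) =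
                edgeChain (Walk.cons h1 (Walk.cons h2 (Walk.cons e4.symm
                  (Walk.cons e3.symm (Walk.cons e2.symm (Walk.cons e1.symm Walk.nil)))))) -
                (Finsupp.single (⟨(a', w1), e1⟩ : (permutograph N s).Dart) 1 +
                  Finsupp.single (⟨(a', w1), e1⟩ : (permutograph N s).Dart).symm 1) -
                (Finsupp.single (⟨(w1, w2), e2⟩ : (permutograph N s).Dart) 1 +
                  Finsupp.single (⟨(w1, w2), e2⟩ : (permutograph N s).Dart).symm 1) -
                (Finsupp.single (⟨(w2, w3), e3⟩ : (permutograph N s).Dart) 1 +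
                  Finsupp.single (⟨(w2, w3), e3⟩ : (permutograph N s).Dart).symm 1) -
                (Finsupp.single (⟨(w3, n), e4⟩ : (permutograph N s).Dart) 1 +
                  Finsupp.single (⟨(w3, n), e4⟩ : (permutograph N s).Dart).symm 1) := by
              rw [s1, s2, s3, s4]
              simp only [edgeChain_cons, edgeChain_nil]
              abel
            rw [hdiff]
            exact sub_mem (sub_mem (sub_mem (sub_mem hhex (mem2 _)) (mem2 _)) (mem2 _)) (mem2 _)
        · -- hexagon: i = j + 1
          set A : Fin N := ⟨j, Nat.lt_of_succ_lt hjN⟩ with hAdef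
          set B : Fin N := ⟨j+1, hjN⟩ with hBdef
          set C : Fin N := ⟨j+1+1, hiN⟩ with hCdef
          have hAB : A ≠ B := Fin.ne_of_val_ne (by simp [hAdef, hBdef])
          have hAC : A ≠ C := Fin.ne_of_val_ne (by simp [hAdef, hCdef]; omega)
          have hBC : B ≠ C := Fin.ne_of_val_ne (by simp [hBdef, hCdef])
          have hm2 : m = a' ∘ ⇑(Equiv.swap B C) := hm
          have hlt_a2 : a' B < a' C := hlt_a
          have hlt_m2 : m B < m A := hlt_m
          have ha_mA : m A = a' A := by
            rw [hm2]; simp only [Function.comp_apply]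
            rw [Equiv.swap_apply_of_ne_of_ne hAB hAC]
          have ha_mB : m B = a' C := by
            rw [hm2]; simp only [Function.comp_apply, Equiv.swap_apply_left]
          have hyx : a' C < a' A := by rw [← ha_mA, ← ha_mB]; exact hlt_m2
          have hzy : a' B < a' C := hlt_a2
          have hzx : a' B < a' A := lt_trans hzy hyx
          set w1 : Fin N → Fin s := a' ∘ ⇑(Equiv.swap A B) with hw1
          set w2 : Fin N → Fin s := w1 ∘ ⇑(Equiv.swap B C) with hw2
          set w3 : Fin N → Fin s := w2 ∘ ⇑(Equiv.swap A B) with hw3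
          have hv_w1A : w1 A = a' B := by
            rw [hw1]; simp only [Function.comp_apply, Equiv.swap_apply_left]
          have hv_w1B : w1 B = a' A := by
            rw [hw1]; simp only [Function.comp_apply, Equiv.swap_apply_right]
          have hv_w1C : w1 C = a' C := by
            rw [hw1]; simp only [Function.comp_apply]
            rw [Equiv.swap_apply_of_ne_of_ne hAC.symm hBC.symm]
          have hv_w2A : w2 A = w1 A := by
            rw [hw2]; simp only [Function.comp_apply]
            rw [Equiv.swap_apply_of_ne_of_ne hAB hAC]
          have hv_w2B : w2 B = w1 C := by
            rw [hw2]; simp only [Function.comp_apply, Equiv.swap_apply_left]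
          have hv_w2C : w2 C = w1 B := by
            rw [hw2]; simp only [Function.comp_apply, Equiv.swap_apply_right]
          have hv_w3A : w3 A = w2 B := by
            rw [hw3]; simp only [Function.comp_apply, Equiv.swap_apply_left]
          have hv_w3B : w3 B = w2 A := by
            rw [hw3]; simp only [Function.comp_apply, Equiv.swap_apply_right]
          have hv_w3C : w3 C = w2 C := by
            rw [hw3]; simp only [Function.comp_apply]
            rw [Equiv.swap_apply_of_ne_of_ne hAC.symm hBC.symm]
          have e1 : (permutograph N s).Adj a' w1 := by
            refine ⟨j, hjN, ?_, hw1⟩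
            exact ne_of_gt hzx
          have e2 : (permutograph N s).Adj w1 w2 := by
            refine ⟨j+1, hiN, ?_, ?_⟩
            · show w1 B ≠ w1 C
              rw [hv_w1B, hv_w1C]
              exact ne_of_gt hyx
            · exact hw2
          have e3 : (permutograph N s).Adj w2 w3 := by
            refine ⟨j, hjN, ?_, hw3⟩
            rw [hv_w2A, hv_w1A, hv_w2B, hv_w1C]
            exact ne_of_lt hzy
          have e4 : (permutograph N s).Adj w3 n := by
            refine ⟨j+1, hiN, ?_, ?_⟩
            · show w3 B ≠ w3 C
              rw [hv_w3B, hv_w2A, hv_w1A, hv_w3C, hv_w2C, hv_w1B]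
              exact ne_of_lt hzx
            · rw [hn, hm2, hw3, hw2, hw1]
              funext x0
              simp only [Function.comp_apply]
              exact congrArg a' (braid_fun' hAB hAC hBC x0)
          have hH1 : hgt a' = hgt w1 + 1 := by
            rw [hw1]; exact hgt_swap_descent' rfl hzx
          have hH2 : hgt w1 = hgt w2 + 1 := by
            rw [hw2]
            refine hgt_swap_descent' rfl ?_
            rw [hv_w1B, hv_w1C]
            exact hyx
          have hH3 : hgt w3 = hgt w2 + 1 := by
            rw [hw3]
            refine hgt_swap_ascent' rfl ?_
            rw [hv_w2A, hv_w1A, hv_w2B, hv_w1C]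
            exact hzy
          have hone : 1 ≤ 3 ^ (hgt w2) := Nat.one_le_pow _ _ (by norm_num)
          have hp1 : (3:ℕ) ^ (hgt w1) = 3 * 3 ^ (hgt w2) := by
            rw [hH2, pow_succ]; ring
          have hp3 : (3:ℕ) ^ (hgt w3) = 3 * 3 ^ (hgt w2) := by
            rw [hH3, pow_succ]; ring
          have hpm : (3:ℕ) ^ (hgt m) = 27 * 3 ^ (hgt w2) := by
            have : hgt m = hgt w2 + 3 := by omega
            rw [this, pow_add]; ring
          refine ⟨Walk.cons e1 (Walk.cons e2 (Walk.cons e3 (Walk.cons e4 q))), ?_, ?_⟩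
          · simp only [Walk.support_cons, List.map_cons, List.sum_cons]
            omega
          · have hhex : edgeChain (Walk.cons h1 (Walk.cons h2 (Walk.cons e4.symm
                (Walk.cons e3.symm (Walk.cons e2.symm (Walk.cons e1.symm Walk.nil))))))
                ∈ cycSpan (permutograph N s) :=
              closedWalk_mem_cycSpan _ (Or.inr (Or.inr (by
                simp [SimpleGraph.Walk.length_cons])))
            have s1 : (⟨(a', w1), e1⟩ : (permutograph N s).Dart).symm =
                ⟨(w1, a'), e1.symm⟩ := rfl
            have s2 : (⟨(w1, w2), e2⟩ : (permutograph N s).Dart).symm =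
                ⟨(w2, w1), e2.symm⟩ := rfl
            have s3 : (⟨(w2, w3), e3⟩ : (permutograph N s).Dart).symm =
                ⟨(w3, w2), e3.symm⟩ := rfl
            have s4 : (⟨(w3, n), e4⟩ : (permutograph N s).Dart).symm =
                ⟨(n, w3), e4.symm⟩ := rfl
            have hdiff : edgeChain (Walk.cons h1 (Walk.cons h2 q)) -
                edgeChain (Walk.cons e1 (Walk.cons e2 (Walk.cons e3 (Walk.cons e4 q)))) =
                edgeChain (Walk.cons h1 (Walk.cons h2 (Walk.cons e4.symm
                  (Walk.cons e3.symm (Walk.cons e2.symm (Walk.cons e1.symm Walk.nil)))))) -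
                (Finsupp.single (⟨(a', w1), e1⟩ : (permutograph N s).Dart) 1 +
                  Finsupp.single (⟨(a', w1), e1⟩ : (permutograph N s).Dart).symm 1) -
                (Finsupp.single (⟨(w1, w2), e2⟩ : (permutograph N s).Dart) 1 +
                  Finsupp.single (⟨(w1, w2), e2⟩ : (permutograph N s).Dart).symm 1) -
                (Finsupp.single (⟨(w2, w3), e3⟩ : (permutograph N s).Dart) 1 +
                  Finsupp.single (⟨(w2, w3), e3⟩ : (permutograph N s).Dart).symm 1) -
                (Finsupp.single (⟨(w3, n), e4⟩ : (permutograph N s).Dart) 1 +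
                  Finsupp.single (⟨(w3, n), e4⟩ : (permutograph N s).Dart).symm 1) := by
              rw [s1, s2, s3, s4]
              simp only [edgeChain_cons, edgeChain_nil]
              abel
            rw [hdiff]
            exact sub_mem (sub_mem (sub_mem (sub_mem hhex (mem2 _)) (mem2 _)) (mem2 _)) (mem2 _)
end Surgery

section LemC
variable {N s : ℕ}

lemma adj_hgt {u w : Fin N → Fin s} (h : (permutograph N s).Adj u w) :
    hgt w = hgt u + 1 ∨ hgt u = hgt w + 1 := by
  obtain ⟨i, hiN, hne, hw⟩ := h
  subst hw
  rcases adj_dirs hiN hne with ⟨_, h⟩ | ⟨_, h⟩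
  · exact Or.inl h
  · exact Or.inr h

lemma support_chain_stepR {u v : Fin N → Fin s} (p : (permutograph N s).Walk u v) :
    List.Chain' stepR (p.support.map hgt) := by
  refine List.isChain_map_of_isChain hgt ?_ (SimpleGraph.Walk.isChain_adj_support p)
  intro x y hadj
  rcases adj_hgt hadj with h | h
  · exact Or.inr h
  · exact Or.inl h

lemma closed_chain_mem {b : Fin N → Fin s} (w : (permutograph N s).Walk b b) :
    edgeChain w ∈ cycSpan (permutograph N s) := by
  suffices H : ∀ (M : ℕ) (b : Fin N → Fin s) (w : (permutograph N s).Walk b b),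
      (w.support.map fun x => 3 ^ hgt x).sum ≤ M → edgeChain w ∈ cycSpan (permutograph N s) by
    exact H _ b w le_rfl
  intro M
  induction M using Nat.strong_induction_on with
  | _ M ih =>
    intro b w hle
    cases w with
    | nil => simp only [edgeChain_nil]; exact Submodule.zero_mem _
    | @cons _ u2 _ h1 w₁ =>
      by_cases hilm : listILM ((Walk.cons h1 w₁).support.map hgt)
      · obtain ⟨p', hμ, hS⟩ := lemD _ hilm
        have hsplit : edgeChain (Walk.cons h1 w₁) =
            (edgeChain (Walk.cons h1 w₁) - edgeChain p') + edgeChain p' := by abel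
        rw [hsplit]
        exact add_mem hS (ih _ (lt_of_lt_of_le hμ hle) b p' le_rfl)
      · -- no interior local max: rotate the closed walk
        have hchain := support_chain_stepR (Walk.cons h1 w₁)
        have hne1 : w₁.support ≠ [] := w₁.support_ne_nil
        have hlast : (((Walk.cons h1 w₁).support.map hgt)).getLast (by simp) = hgt b := by
          rw [List.getLast_map, SimpleGraph.Walk.getLast_support]
        have hform : (Walk.cons h1 w₁).support.map hgt =
            hgt b :: (w₁.support.map hgt) := by
          rw [SimpleGraph.Walk.support_cons, List.map_cons]
        have hbound := listF (w₁.support.map hgt) (hgt b) (by rw [← hform]; exact hilm)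
          (by rw [← hform]; exact hchain)
        have hu2mem : hgt u2 ∈ hgt b :: (w₁.support.map hgt) := by
          right
          exact List.mem_map_of_mem (f := hgt) w₁.start_mem_support
        have hu2le : hgt u2 ≤ hgt b := by
          have := hbound (hgt u2) hu2mem
          have hl : (hgt b :: w₁.support.map hgt).getLast (by simp) = hgt b := by
            rw [List.getLast_cons (by simpa using hne1 : w₁.support.map hgt ≠ [])]
            rw [List.getLast_map]
            rw [SimpleGraph.Walk.getLast_support]
          rw [hl, max_self] at this
          exact this
        have hu2lt : hgt u2 < hgt b := by
          rcases adj_hgt h1 with h | h <;> omega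
        -- rotated walk
        have hpowlt : (3:ℕ) ^ hgt u2 < 3 ^ hgt b :=
          Nat.pow_lt_pow_right (by norm_num) hu2lt
        have hμ2 : ((w₁.append (Walk.cons h1 Walk.nil)).support.map
            fun x => 3 ^ hgt x).sum < M := by
          have e : (w₁.append (Walk.cons h1 Walk.nil)).support =
              w₁.support ++ [u2] := by
            rw [SimpleGraph.Walk.support_append]
            rfl
          rw [e, List.map_append, List.sum_append] at *
          simp only [SimpleGraph.Walk.support_cons, List.map_cons, List.sum_cons] at hle
          simp only [List.map_cons, List.map_nil, List.sum_cons, List.sum_nil]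
          omega
        have hchain_eq : edgeChain (Walk.cons h1 w₁) =
            edgeChain (w₁.append (Walk.cons h1 Walk.nil)) := by
          simp only [edgeChain_append, edgeChain_cons, edgeChain_nil]
          abel
        rw [hchain_eq]
        exact ih _ hμ2 u2 _ le_rfl
end LemC

section Sorting
variable {N s : ℕ}

/-- The sorted (weakly increasing) rearrangement of a word. -/
noncomputable def sortW (v : Fin N → Fin s) : Fin N → Fin s := fun k =>
  ((Multiset.map v (Finset.univ.val : Multiset (Fin N))).sort (· ≤ ·)).getD k (v k)

lemma sort_len (v : Fin N → Fin s) :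
    ((Multiset.map v (Finset.univ.val : Multiset (Fin N))).sort (· ≤ ·)).length = N := by
  simp

lemma ofFn_sortW (v : Fin N → Fin s) :
    List.ofFn (sortW v) = (Multiset.map v (Finset.univ.val : Multiset (Fin N))).sort (· ≤ ·) := by
  apply List.ext_getElem
  · simp [sort_len]
  · intro i h1 h2
    simp only [List.getElem_ofFn, sortW]
    rw [List.getD_eq_getElem _ _ (by rw [sort_len]; simpa using h2)]

lemma coe_ofFn (v : Fin N → Fin s) :
    (↑(List.ofFn v) : Multiset (Fin s)) = Multiset.map v (Finset.univ.val : Multiset (Fin N)) := by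
  rw [List.ofFn_eq_map, Fin.univ_def]
  simp

lemma map_swap_univ (σ : Equiv.Perm (Fin N)) (v : Fin N → Fin s) :
    Multiset.map (v ∘ σ) (Finset.univ.val : Multiset (Fin N)) = Multiset.map v Finset.univ.val := by
  rw [← Multiset.map_map]
  congr 1
  calc Multiset.map (⇑σ) Finset.univ.val
      = (Finset.map σ.toEmbedding Finset.univ).val := by rw [Finset.map_val]; rfl
    _ = Finset.univ.val := by rw [Finset.map_univ_equiv]

lemma sortW_perm_eq {u v : Fin N → Fin s}
    (h : Multiset.map u (Finset.univ.val : Multiset (Fin N)) = Multiset.map v Finset.univ.val) :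
    sortW u = sortW v := by
  have : List.ofFn (sortW u) = List.ofFn (sortW v) := by
    rw [ofFn_sortW, ofFn_sortW, h]
  exact List.ofFn_inj.1 this

lemma sortW_adj {u w : Fin N → Fin s} (h : (permutograph N s).Adj u w) :
    sortW u = sortW w := by
  obtain ⟨i, hiN, hne, hw⟩ := h
  subst hw
  exact (sortW_perm_eq (map_swap_univ _ u)).symm

lemma sortW_sorted (v : Fin N → Fin s) : List.Pairwise (· ≤ ·) (List.ofFn (sortW v)) := by
  rw [ofFn_sortW]
  exact Multiset.pairwise_sort _ _

lemma eq_sortW {v w : Fin N → Fin s} (hm : Monotone w)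
    (hperm : Multiset.map w (Finset.univ.val : Multiset (Fin N)) = Multiset.map v Finset.univ.val) :
    w = sortW v := by
  have hp : (List.ofFn w).Perm (List.ofFn (sortW v)) := by
    rw [← Multiset.coe_eq_coe, coe_ofFn, coe_ofFn, hperm, ← coe_ofFn (sortW v), ofFn_sortW,
      Multiset.sort_eq]
  exact List.ofFn_inj.1 (List.Perm.eq_of_pairwise'
    (List.sortedLE_ofFn_iff.2 hm).pairwise (sortW_sorted v) hp)

lemma mono_of_no_descent {v : Fin N → Fin s}
    (h : ∀ i (hi : i + 1 < N), v ⟨i, Nat.lt_of_succ_lt hi⟩ ≤ v ⟨i+1, hi⟩) : Monotone v := by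
  have H : ∀ (d : ℕ) (a : Fin N) (hi : (a : ℕ) + d < N), v a ≤ v ⟨(a : ℕ) + d, hi⟩ := by
    intro d
    induction d with
    | zero =>
      intro a hi
      have : (⟨(a : ℕ) + 0, hi⟩ : Fin N) = a := Fin.ext (by simp)
      rw [this]
    | succ d ih =>
      intro a hi
      have e : (⟨(a : ℕ) + (d + 1), hi⟩ : Fin N) = ⟨((a : ℕ) + d) + 1, by omega⟩ :=
        Fin.ext (by show (a : ℕ) + (d + 1) = ((a : ℕ) + d) + 1; omega)
      rw [e]
      exact le_trans (ih a (by omega)) (h ((a : ℕ) + d) (by omega))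
  intro a b hab
  have hd : b = ⟨(a : ℕ) + ((b : ℕ) - (a : ℕ)), by have := b.isLt; have := Fin.le_def.1 hab; omega⟩ :=
    Fin.ext (by
      show (b : ℕ) = (a : ℕ) + ((b : ℕ) - (a : ℕ))
      have := Fin.le_def.1 hab
      omega)
  rw [hd]
  exact H _ a _

open scoped Classical in
/-- Bubble-sort walk from a word to its sorted rearrangement. -/
noncomputable def pathToSort (v : Fin N → Fin s) : (permutograph N s).Walk v (sortW v) :=
    if h : ∃ i, ∃ hi : i + 1 < N, v ⟨i+1, hi⟩ < v ⟨i, Nat.lt_of_succ_lt hi⟩ then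
      (Walk.cons (⟨h.choose, h.choose_spec.choose, ne_of_gt h.choose_spec.choose_spec, rfl⟩ :
          (permutograph N s).Adj v (v ∘ Equiv.swap
            ⟨h.choose, Nat.lt_of_succ_lt h.choose_spec.choose⟩
            ⟨h.choose + 1, h.choose_spec.choose⟩))
        (pathToSort (v ∘ Equiv.swap ⟨h.choose, Nat.lt_of_succ_lt h.choose_spec.choose⟩
            ⟨h.choose + 1, h.choose_spec.choose⟩))).copy rfl
        (sortW_perm_eq (map_swap_univ _ v))
    else
      (Walk.nil : (permutograph N s).Walk v v).copy rfl
        (eq_sortW (mono_of_no_descent (by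
          intro i hi
          by_contra hcon
          exact h ⟨i, hi, lt_of_not_ge hcon⟩)) rfl)
  termination_by hgt v
  decreasing_by
    have := hgt_swap_descent' (p := ⟨h.choose, Nat.lt_of_succ_lt h.choose_spec.choose⟩)
      (q := ⟨h.choose + 1, h.choose_spec.choose⟩) rfl h.choose_spec.choose_spec
    omega

end Sorting

section Final
variable {N s : ℕ}

noncomputable def PtoS : (Fin N → Fin s) → ((permutograph N s).Dart →₀ ℤ) :=
  fun v => edgeChain (pathToSort v)

lemma key_dart (d : (permutograph N s).Dart) :
    Finsupp.single d 1 + (Finsupp.lift ((permutograph N s).Dart →₀ ℤ) ℤ (Fin N → Fin s) PtoS)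
      (graphBoundary (permutograph N s) (Finsupp.single d 1)) ∈ cycSpan (permutograph N s) := by
  have hb : graphBoundary (permutograph N s) (Finsupp.single d 1) =
      Finsupp.single d.toProd.2 1 - Finsupp.single d.toProd.1 1 := by
    simp [graphBoundary, Finsupp.lift_apply, Finsupp.sum_single_index]
  have hΨ : ∀ v : Fin N → Fin s,
      (Finsupp.lift ((permutograph N s).Dart →₀ ℤ) ℤ (Fin N → Fin s) PtoS)
        (Finsupp.single v 1) = PtoS v := by
    intro v
    simp [Finsupp.lift_apply, Finsupp.sum_single_index]
  rw [hb, map_sub, hΨ, hΨ]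
  have hsort : sortW d.toProd.1 = sortW d.toProd.2 := sortW_adj d.adj
  set W : (permutograph N s).Walk d.toProd.1 d.toProd.1 :=
    Walk.cons d.adj ((pathToSort d.toProd.2).append
      (((pathToSort d.toProd.1).reverse).copy hsort rfl)) with hWdef
  have hchain : edgeChain W = Finsupp.single d 1 + PtoS d.toProd.2 +
      edgeChain (pathToSort d.toProd.1).reverse := by
    rw [hWdef]
    rw [edgeChain_cons, edgeChain_append, edgeChain_copy]
    rw [dart_eta]
    rw [PtoS]
    abel
  have hgoal : Finsupp.single d 1 + (PtoS d.toProd.2 - PtoS d.toProd.1) =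
      edgeChain W - (edgeChain (pathToSort d.toProd.1).reverse +
        edgeChain (pathToSort d.toProd.1)) := by
    rw [hchain, PtoS]
    abel
  rw [hgoal]
  exact sub_mem (closed_chain_mem W) (edgeChain_reverse_add_mem _)

end Final

/-- The first homology of a permutograph is generated by closed walks of
length `2`, `4` and `6`: every `1`-cycle (element of `ker ∂`) is a `ℤ`-linear combination
of edge chains of closed walks of length `2`, `4` and `6`. -/
theorem stmt7 (N s : ℕ) (hN : 1 ≤ N) (hs : 1 ≤ s)
    (c : (permutograph N s).Dart →₀ ℤ) (hc : graphBoundary (permutograph N s) c = 0) :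
    c ∈ Submodule.span ℤ
      {x : (permutograph N s).Dart →₀ ℤ |
        ∃ (u : Fin N → Fin s) (w : (permutograph N s).Walk u u),
          (w.length = 2 ∨ w.length = 4 ∨ w.length = 6) ∧ x = edgeChain w} := by
  have hT : ∀ x : (permutograph N s).Dart →₀ ℤ,
      x + (Finsupp.lift ((permutograph N s).Dart →₀ ℤ) ℤ (Fin N → Fin s) PtoS)
        (graphBoundary (permutograph N s) x) ∈ cycSpan (permutograph N s) := by
    intro x
    induction x using Finsupp.induction_linear with
    | zero => simpa using Submodule.zero_mem _
    | add x y hx hy =>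
      have h : (x + y) + (Finsupp.lift ((permutograph N s).Dart →₀ ℤ) ℤ (Fin N → Fin s) PtoS)
            (graphBoundary (permutograph N s) (x + y)) =
          (x + (Finsupp.lift ((permutograph N s).Dart →₀ ℤ) ℤ (Fin N → Fin s) PtoS)
            (graphBoundary (permutograph N s) x)) +
          (y + (Finsupp.lift ((permutograph N s).Dart →₀ ℤ) ℤ (Fin N → Fin s) PtoS)
            (graphBoundary (permutograph N s) y)) := by
        rw [map_add, map_add]
        abel
      rw [h]
      exact add_mem hx hy
    | single a b' =>
      have h1 : Finsupp.single a b' = b' • Finsupp.single a (1 : ℤ) := by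
        rw [Finsupp.smul_single]
        simp
      rw [h1, map_smul, map_smul, ← smul_add]
      exact Submodule.smul_mem _ _ (key_dart a)
  have h := hT c
  rw [hc, map_zero, add_zero] at h
  exact h
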